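/- Under the restriction that exogenous variables appear only in equations of the form V=U (with root variables R⃗), for any setting X⃗=x⃗, any setting N⃗=n⃗ containing Y=y with N⃗ ∩ R⃗ = ∅, and any context u⃗: X⃗=x⃗ is actually directly sufficient for Y=y in (M,u⃗) iff X⃗=x⃗ is directly sufficient for Y=y in M; and X⃗=x⃗ is actually strongly sufficient for Y=y in (M,u⃗) along N⃗=n⃗ iff X⃗=x⃗ is strongly sufficient for Y=y in M along N⃗=n⃗. -/
import Mathlib


open Classical

/-- A strongly recursive structural-equations (causal) model with exogenous
variables `U`, endogenous variables `V`, and values in `α`.  `rng v` is the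
range `R(v)` of an endogenous variable; `F v u s` is the structural equation of
`v` evaluated in context `u` at the assignment `s` (it does not depend on
`s v`); `solve Z g u` is the unique solution of the model obtained by
intervening `Z ← g` in context `u`; `actual u` is the actual world of context
`u`; `prec` is a well-founded order witnessing strong recursivity. -/
structure CausalModel (U V α : Type) where
  rng : V → Set α
  F : V → U → (V → α) → α
  F_rng : ∀ (v : V) (u : U) (s : V → α), F v u s ∈ rng v
  F_self : ∀ (v : V) (u : U) (s s' : V → α), (∀ w, w ≠ v → s w = s' w) → F v u s = F v u s'
  solve : Set V → (V → α) → U → V → α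
  solve_mem : ∀ (Z : Set V) (g : V → α) (u : U), ∀ v ∈ Z, solve Z g u v = g v
  solve_not_mem : ∀ (Z : Set V) (g : V → α) (u : U) (v : V), v ∉ Z →
    solve Z g u v = F v u (solve Z g u)
  solve_unique : ∀ (Z : Set V) (g : V → α) (u : U) (s : V → α),
    (∀ v ∈ Z, s v = g v) → (∀ v ∉ Z, s v = F v u s) → s = solve Z g u
  actual : U → V → α
  actual_def : ∀ (g : V → α) (u : U), solve ∅ g u = actual u
  prec : V → V → Prop
  prec_wf : WellFounded prec
  prec_dep : ∀ a b : V, (∃ (u : U) (s s' : V → α), (∀ w, s w ∈ rng w) ∧ (∀ w, s' w ∈ rng w) ∧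
    (∀ w, w ≠ a → s w = s' w) ∧ F b u s ≠ F b u s') → prec a b

namespace CausalModel

variable {U V α : Type}

/-- The assignment that is `x` on `X` and `g` elsewhere. -/
noncomputable def merge (X : Set V) (x g : V → α) : V → α :=
  fun v => if v ∈ X then x v else g v

/-- `g` is a valid setting: every variable gets a value in its range. -/
def Setting (M : CausalModel U V α) (g : V → α) : Prop := ∀ v, g v ∈ M.rng v

/-- `X⃗=x⃗` is directly sufficient for `Y⃗=y⃗`: in every context, intervening
`X⃗ ← x⃗` together with arbitrary (in-range) values for all remaining variables
`C⃗ = V ∖ (X⃗ ∪ Y⃗)` yields `Y⃗ = y⃗`. -/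
def directlySuff (M : CausalModel U V α) (X : Set V) (x : V → α) (Y : Set V) (y : V → α) : Prop :=
  ∀ g : V → α, M.Setting g → (∀ v ∈ X, g v = x v) →
    ∀ u : U, ∀ v ∈ Y, M.solve (X ∪ (X ∪ Y)ᶜ) g u v = y v

/-- Actual direct sufficiency: as `directlySuff` but only in the given context `u`. -/
def actDirectlySuff (M : CausalModel U V α) (u : U) (X : Set V) (x : V → α)
    (Y : Set V) (y : V → α) : Prop :=
  ∀ g : V → α, M.Setting g → (∀ v ∈ X, g v = x v) →
    ∀ v ∈ Y, M.solve (X ∪ (X ∪ Y)ᶜ) g u v = y v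

/-- `X⃗=x⃗` is weakly sufficient for `Y⃗=y⃗`: in every context, `[X⃗ ← x⃗] Y⃗=y⃗`. -/
def weaklySuff (M : CausalModel U V α) (X : Set V) (x : V → α) (Y : Set V) (y : V → α) : Prop :=
  ∀ u : U, ∀ v ∈ Y, M.solve X x u v = y v

/-- Actual weak sufficiency in context `u`: `(M,u) ⊨ [X⃗ ← x⃗] Y⃗=y⃗`. -/
def actWeaklySuff (M : CausalModel U V α) (u : U) (X : Set V) (x : V → α)
    (Y : Set V) (y : V → α) : Prop :=
  ∀ v ∈ Y, M.solve X x u v = y v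

/-- `X⃗=x⃗` is strongly sufficient for `Y⃗=y⃗`: it is directly sufficient for some
superset `N⃗ ⊇ Y⃗` with values extending `y⃗`. -/
def stronglySuff (M : CausalModel U V α) (X : Set V) (x : V → α) (Y : Set V) (y : V → α) : Prop :=
  ∃ (N : Set V) (n : V → α), Y ⊆ N ∧ (∀ v ∈ Y, n v = y v) ∧ M.directlySuff X x N n

/-- Actual strong sufficiency of `X⃗=x⃗` for the single effect `Y0 = y` along the
network `N` in context `u`. -/
def actStronglySuffNet (M : CausalModel U V α) (u : U) (X : Set V) (x : V → α)
    (Y0 : V) (y : α) (N : Set V) : Prop :=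
  ∃ n : V → α, Y0 ∈ N ∧ n Y0 = y ∧ M.actDirectlySuff u X x N n

/-- `a` is a parent of `b`: the equation of `b` depends on the value of `a`. -/
def IsParent (M : CausalModel U V α) (a b : V) : Prop :=
  ∃ (u : U) (s s' : V → α), M.Setting s ∧ M.Setting s' ∧
    (∀ w, w ≠ a → s w = s' w) ∧ M.F b u s ≠ M.F b u s'

/-- `a` is only a parent of `b`: the single edge `a → b` is the only directed
path from `a` to `b`. -/
def OnlyParent (M : CausalModel U V α) (a b : V) : Prop :=
  M.IsParent a b ∧ ¬ ∃ z, M.IsParent a z ∧ Relation.TransGen M.IsParent z b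

/-- `R` is the set of root variables: equations of members of `R` depend only on
the context, and equations of all other variables do not depend on the context
(exogenous variables appear only in equations of the form `V = U`). -/
def IsRootSet (M : CausalModel U V α) (R : Set V) : Prop :=
  (∀ v ∈ R, ∀ (u : U) (s s' : V → α), M.F v u s = M.F v u s') ∧
  (∀ v ∉ R, ∀ (u u' : U) (s : V → α), M.F v u s = M.F v u' s)

/-- Def 2: contrastive necessity with actual strong sufficiency (AC1, AC2, AC3). -/
def CauseDef2 (M : CausalModel U V α) (u : U) (X : Set V) (x : V → α) (Y0 : V) (y : α) : Prop :=
  (∀ v ∈ X, M.actual u v = x v) ∧ M.actual u Y0 = y ∧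
  (∃ (W N : Set V) (x' : V → α), Disjoint W (X ∪ {Y0}) ∧ (∀ v ∈ X, x' v ∈ M.rng v) ∧
      M.actStronglySuffNet u (X ∪ W) (merge X x (M.actual u)) Y0 y N ∧
      ∀ S ⊆ N, ¬ M.actStronglySuffNet u (X ∪ W) (merge X x' (M.actual u)) Y0 y S) ∧
  (∀ X' ⊂ X, ¬ ∃ (W N : Set V) (x' : V → α), Disjoint W (X' ∪ {Y0}) ∧
      (∀ v ∈ X', x' v ∈ M.rng v) ∧
      M.actStronglySuffNet u (X' ∪ W) (merge X' x (M.actual u)) Y0 y N ∧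
      ∀ S ⊆ N, ¬ M.actStronglySuffNet u (X' ∪ W) (merge X' x' (M.actual u)) Y0 y S)

/-- Def 3: contrastive necessity with actual direct sufficiency (AC1, AC2, AC3). -/
def CauseDef3 (M : CausalModel U V α) (u : U) (X : Set V) (x : V → α) (Y0 : V) (y : α) : Prop :=
  (∀ v ∈ X, M.actual u v = x v) ∧ M.actual u Y0 = y ∧
  (∃ (W : Set V) (x' : V → α), Disjoint W (X ∪ {Y0}) ∧ (∀ v ∈ X, x' v ∈ M.rng v) ∧
      M.actDirectlySuff u (X ∪ W) (merge X x (M.actual u)) {Y0} (fun _ => y) ∧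
      ¬ M.actDirectlySuff u (X ∪ W) (merge X x' (M.actual u)) {Y0} (fun _ => y)) ∧
  (∀ X' ⊂ X, ¬ ∃ (W : Set V) (x' : V → α), Disjoint W (X' ∪ {Y0}) ∧
      (∀ v ∈ X', x' v ∈ M.rng v) ∧
      M.actDirectlySuff u (X' ∪ W) (merge X' x (M.actual u)) {Y0} (fun _ => y) ∧
      ¬ M.actDirectlySuff u (X' ∪ W) (merge X' x' (M.actual u)) {Y0} (fun _ => y))

/-- Def 4 (singleton cause): contrastive necessity with non-actual weak sufficiency. -/
def CauseDef4 (M : CausalModel U V α) (u : U) (X0 : V) (x0 : α) (Y0 : V) (y : α) : Prop :=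
  M.actual u X0 = x0 ∧ M.actual u Y0 = y ∧
  ∃ (W : Set V) (x' : α), Disjoint W ({X0} ∪ {Y0} : Set V) ∧ x' ∈ M.rng X0 ∧
    M.weaklySuff ({X0} ∪ W) (merge {X0} (fun _ => x0) (M.actual u)) {Y0} (fun _ => y) ∧
    ¬ M.weaklySuff ({X0} ∪ W) (merge {X0} (fun _ => x') (M.actual u)) {Y0} (fun _ => y)

/-- Def 8 (singleton cause): minimal necessity with actual strong sufficiency
(minimality AC3 is automatic for singletons). -/
def CauseDef8 (M : CausalModel U V α) (u : U) (X0 : V) (x0 : α) (Y0 : V) (y : α) : Prop :=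
  M.actual u X0 = x0 ∧ M.actual u Y0 = y ∧
  ∃ W N : Set V, Disjoint W ({X0} ∪ {Y0} : Set V) ∧
    M.actStronglySuffNet u ({X0} ∪ W) (merge {X0} (fun _ => x0) (M.actual u)) Y0 y N ∧
    ∀ S ⊆ N, ¬ M.actStronglySuffNet u W (M.actual u) Y0 y S

/-- Def 10 (singleton cause): minimal necessity with non-actual weak sufficiency. -/
def CauseDef10 (M : CausalModel U V α) (u : U) (X0 : V) (x0 : α) (Y0 : V) (y : α) : Prop :=
  M.actual u X0 = x0 ∧ M.actual u Y0 = y ∧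
  ∃ W : Set V, Disjoint W ({X0} ∪ {Y0} : Set V) ∧
    M.weaklySuff ({X0} ∪ W) (merge {X0} (fun _ => x0) (M.actual u)) {Y0} (fun _ => y) ∧
    ¬ M.weaklySuff W (M.actual u) {Y0} (fun _ => y)

end CausalModel

namespace CausalModel

/-- If every non-intervened variable is a non-root, the solution of the
intervened model does not depend on the context. -/
lemma solve_context_indep {U V α : Type} (M : CausalModel U V α)
    {R : Set V} (hR : M.IsRootSet R) (Z : Set V) (g : V → α) (u u' : U)
    (h : ∀ v, v ∉ Z → v ∉ R) : M.solve Z g u = M.solve Z g u' := by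
  apply M.solve_unique
  · intro v hv; exact M.solve_mem Z g u v hv
  · intro v hv
    rw [M.solve_not_mem Z g u v hv]
    exact hR.2 v (h v hv) u u' _

/-- Actual direct sufficiency coincides with direct sufficiency when all
non-intervened target variables are non-roots. -/
lemma actDirectlySuff_iff_aux {U V α : Type} (M : CausalModel U V α)
    {R : Set V} (hR : M.IsRootSet R) (X : Set V) (x : V → α)
    (N : Set V) (n : V → α) (u : U) (hNR : ∀ v ∈ N, v ∉ R) :
    M.actDirectlySuff u X x N n ↔ M.directlySuff X x N n := by
  constructor
  · intro hact g hg hgX u'' v hv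
    have hctx : M.solve (X ∪ (X ∪ N)ᶜ) g u'' = M.solve (X ∪ (X ∪ N)ᶜ) g u := by
      apply solve_context_indep M hR
      intro w hw
      have hwX : w ∉ X := fun h => hw (Or.inl h)
      have hwN : w ∈ N := by
        by_contra hwN
        exact hw (Or.inr (fun h => h.elim hwX hwN))
      exact hNR w hwN
    rw [hctx]
    exact hact g hg hgX v hv
  · intro hds g hg hgX v hv
    exact hds g hg hgX u v hv

/-- under the root-variable restriction, for any `N⃗=n⃗` containing
`Y=y` with `N⃗ ∩ R⃗ = ∅` and any context `u`: actual direct sufficiency of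
`X⃗=x⃗` for `Y=y` in `(M,u)` coincides with direct sufficiency in `M`, and
actual strong sufficiency along `N⃗=n⃗` coincides with strong sufficiency along
`N⃗=n⃗` (i.e. (actual) direct sufficiency for `N⃗=n⃗`). -/
theorem actual_iff_nonactual_suff {U V α : Type} (M : CausalModel U V α)
    (R : Set V) (hR : M.IsRootSet R) (X : Set V) (x : V → α)
    (Y0 : V) (y : α) (N : Set V) (n : V → α) (u : U)
    (hY0 : Y0 ∈ N) (hn : n Y0 = y) (hNR : N ∩ R = ∅) (hYX : Y0 ∉ X) :
    (M.actDirectlySuff u X x {Y0} (fun _ => y) ↔ M.directlySuff X x {Y0} (fun _ => y)) ∧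
    (M.actDirectlySuff u X x N n ↔ M.directlySuff X x N n) := by
  have hNR' : ∀ v ∈ N, v ∉ R := fun v hv hvR =>
    (Set.eq_empty_iff_forall_notMem.mp hNR v) ⟨hv, hvR⟩
  constructor
  · exact actDirectlySuff_iff_aux M hR X x {Y0} (fun _ => y) u
      (fun v hv => by rw [Set.mem_singleton_iff] at hv; exact hv ▸ hNR' Y0 hY0)
  · exact actDirectlySuff_iff_aux M hR X x N n u hNR'

end CausalModel
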